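/- For the subfractal F_{X_A} of an HIFS satisfying the OSC, induced by an SFT with irreducible matrix: the upper box dimension satisfies dim̄_B(F_{X_A}) ≤ H, where H is the zero of the upper pressure function. -/

import Mathlib

open Filter Finset MeasureTheory Metric

/-- `applyWord f ω x = f_{ω_n} ∘ ⋯ ∘ f_{ω_1} (x)`. -/
def applyWord {X : Type*} {m : ℕ} (f : Fin m → X → X) {l : ℕ}
    (ω : Fin l → Fin m) (x : X) : X :=
  (List.ofFn ω).foldl (fun y a => f a y) x

/-- `coverNumber s r` is the smallest number of sets of diameter at most `r` needed to
cover `s` (or `0` by convention if no finite cover exists). -/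
noncomputable def coverNumber {X : Type*} [PseudoMetricSpace X] (s : Set X) (r : ℝ) : ℕ :=
  sInf {n : ℕ | ∃ C : Finset (Set X), C.card ≤ n ∧ (∀ E ∈ C, diam E ≤ r) ∧
    s ⊆ ⋃ E ∈ C, E}

/-- The upper box dimension `limsup_{r → 0⁺} log N_r(s) / (- log r)`. -/
noncomputable def upperBoxDim {X : Type*} [PseudoMetricSpace X] (s : Set X) : ℝ :=
  Filter.limsup (fun r : ℝ => Real.log (coverNumber s r) / (-Real.log r))
    (nhdsWithin 0 (Set.Ioi 0))

theorem applyWord_zero {X : Type*} {m : ℕ} (f : Fin m → X → X)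
    (ω : Fin 0 → Fin m) (x : X) : applyWord f ω x = x := rfl

theorem applyWord_succ {X : Type*} {m : ℕ} (f : Fin m → X → X) {l : ℕ}
    (ω : Fin (l+1) → Fin m) (x : X) :
    applyWord f ω x = applyWord f (fun i => ω i.succ) (f (ω 0) x) := by
  simp [applyWord, List.ofFn_succ]

theorem applyWord_lip {X : Type*} [PseudoMetricSpace X] {m : ℕ}
    (f : Fin m → X → X) (K : Set X) (cbar : Fin m → ℝ)
    (hfK : ∀ i, Set.MapsTo (f i) K K)
    (hcb : ∀ i, 0 ≤ cbar i)
    (hlip : ∀ i, ∀ x ∈ K, ∀ y ∈ K, dist (f i x) (f i y) ≤ cbar i * dist x y) :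
    ∀ (l : ℕ) (ω : Fin l → Fin m), Set.MapsTo (applyWord f ω) K K ∧
      ∀ x ∈ K, ∀ y ∈ K,
        dist (applyWord f ω x) (applyWord f ω y) ≤ (∏ i, cbar (ω i)) * dist x y := by
  intro l
  induction l with
  | zero =>
    intro ω
    refine ⟨fun x hx => by simpa [applyWord_zero] using hx, ?_⟩
    intro x hx y hy
    simp [applyWord_zero]
  | succ l ih =>
    intro ω
    obtain ⟨hmap, hdist⟩ := ih (fun i => ω i.succ)
    constructor
    · intro x hx
      rw [applyWord_succ]
      exact hmap (hfK _ hx)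
    · intro x hx y hy
      rw [applyWord_succ, applyWord_succ, Fin.prod_univ_succ]
      calc dist (applyWord f (fun i => ω i.succ) (f (ω 0) x))
            (applyWord f (fun i => ω i.succ) (f (ω 0) y))
          ≤ (∏ i : Fin l, cbar (ω i.succ)) * dist (f (ω 0) x) (f (ω 0) y) :=
            hdist _ (hfK _ hx) _ (hfK _ hy)
        _ ≤ (∏ i : Fin l, cbar (ω i.succ)) * (cbar (ω 0) * dist x y) := by
            apply mul_le_mul_of_nonneg_left (hlip _ _ hx _ hy)
            exact Finset.prod_nonneg fun i _ => hcb _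
        _ = (cbar (ω 0) * ∏ i : Fin l, cbar (ω i.succ)) * dist x y := by ring

theorem tendsto_log_affine_div (a b : ℝ) (ha : 0 < a) :
    Tendsto (fun s : ℝ => Real.log (a * s + b) / s) atTop (nhds 0) := by
  have h1 : (fun s : ℝ => Real.log (a * s + b)) =o[atTop] (fun s => a * s + b) :=
    Real.isLittleO_log_id_atTop.comp_tendsto
      (tendsto_atTop_add_const_right atTop b (tendsto_id.const_mul_atTop ha))
  have h2 : (fun s : ℝ => a * s + b) =O[atTop] (fun s : ℝ => s) := by
    apply Asymptotics.IsBigO.of_bound (|a| + |b|)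
    filter_upwards [eventually_ge_atTop (1:ℝ)] with s hs
    have h0 : (0:ℝ) ≤ s := by linarith
    rw [Real.norm_eq_abs, Real.norm_eq_abs, abs_of_nonneg h0]
    calc |a * s + b| ≤ |a * s| + |b| := abs_add_le _ _
      _ = |a| * s + |b| := by rw [abs_mul, abs_of_nonneg h0]
      _ ≤ |a| * s + |b| * s := by nlinarith [abs_nonneg b]
      _ = (|a| + |b|) * s := by ring
  exact (h1.trans_isBigO h2).tendsto_div_nhds_zero

set_option maxHeartbeats 2000000 in
/-- For the subfractal `F_{X_A}` of an HIFS satisfying the OSC, induced by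
an SFT with irreducible matrix, the upper box dimension satisfies
`dim̄_B (F_{X_A}) ≤ H`, where `H` is the zero of the upper pressure function. -/
theorem subfractal_upper_box_dim_bound
    {d : ℕ} (m : ℕ) (hm : 0 < m)
    (K : Set (EuclideanSpace ℝ (Fin d))) (hK : IsCompact K) (hKne : K.Nonempty)
    (f : Fin m → EuclideanSpace ℝ (Fin d) → EuclideanSpace ℝ (Fin d))
    (hfK : ∀ i, Set.MapsTo (f i) K K)
    (c cbar : Fin m → ℝ) (hc : ∀ i, 0 < c i ∧ c i ≤ cbar i ∧ cbar i < 1)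
    (hlip : ∀ i, ∀ x ∈ K, ∀ y ∈ K,
      c i * dist x y ≤ dist (f i x) (f i y) ∧ dist (f i x) (f i y) ≤ cbar i * dist x y)
    -- the open set condition
    (U : Set (EuclideanSpace ℝ (Fin d))) (hUopen : IsOpen U) (hUne : U.Nonempty)
    (hUK : U ⊆ K) (hUinv : ∀ i, f i '' U ⊆ U)
    (hUdisj : ∀ i j, i ≠ j → (f i '' U) ∩ (f j '' U) = ∅)
    -- the SFT and its subfractal, given by the coding map `π`
    (W : ∀ n : ℕ, Finset (Fin n → Fin m)) (hWne : ∀ n, (W n).Nonempty)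
    (π : {x : ℕ → Fin m // ∀ n : ℕ, (fun i : Fin n => x i.1) ∈ W n} →
      EuclideanSpace ℝ (Fin d))
    (hπ : ∀ x (l : ℕ), π x ∈ applyWord f (fun i : Fin l => x.1 i.1) '' K)
    -- the upper topological pressure function, its zero `H`, and the uniform bound `L₁`
    (Pbar : ℝ → ℝ)
    (hPbar : ∀ t : ℝ, Tendsto
      (fun n : ℕ => (1 / (n : ℝ)) * Real.log (∑ ω ∈ W n, (∏ i, cbar (ω i)) ^ t))
      atTop (nhds (Pbar t)))
    (H : ℝ) (hH0 : 0 ≤ H) (hHzero : Pbar H = 0)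
    (L1 : ℝ) (hL1pos : 0 < L1)
    (hL1 : ∀ n : ℕ, 1 ≤ n → ∑ ω ∈ W n, (∏ i, cbar (ω i)) ^ H ≤ L1) :
    upperBoxDim (Set.range π) ≤ H := by
  classical
  haveI : Nonempty (Fin m) := ⟨⟨0, hm⟩⟩
  set S : Set (EuclideanSpace ℝ (Fin d)) := Set.range π with hSdef
  set F : Filter ℝ := nhdsWithin 0 (Set.Ioi 0) with hFdef
  -- constants
  set cmin : ℝ := Finset.univ.inf' Finset.univ_nonempty c with hcmindef
  set cmax : ℝ := Finset.univ.sup' Finset.univ_nonempty cbar with hcmaxdef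
  have hcmin_le : ∀ i, cmin ≤ c i := fun i => Finset.inf'_le _ (Finset.mem_univ i)
  have hcmin_pos : 0 < cmin := by
    rw [hcmindef, Finset.lt_inf'_iff]
    exact fun i _ => (hc i).1
  have hcbar_le_cmax : ∀ i, cbar i ≤ cmax := fun i => Finset.le_sup' _ (Finset.mem_univ i)
  have hcmax_lt_one : cmax < 1 := by
    rw [hcmaxdef, Finset.sup'_lt_iff]
    exact fun i _ => (hc i).2.2
  have hcbar_pos : ∀ i, 0 < cbar i := fun i => lt_of_lt_of_le (hc i).1 (hc i).2.1
  have hcmax_pos : 0 < cmax :=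
    lt_of_lt_of_le (hcbar_pos (Classical.arbitrary _)) (hcbar_le_cmax _)
  have hcmin_lt_one : cmin < 1 :=
    lt_of_le_of_lt (le_trans (hcmin_le (Classical.arbitrary _)) (hc _).2.1)
      (hc (Classical.arbitrary _)).2.2
  set D : ℝ := diam K with hDdef
  have hD0 : 0 ≤ D := diam_nonneg
  have hbd : Bornology.IsBounded K := hK.isBounded
  have prodnn : ∀ {l : ℕ} (ω : Fin l → Fin m), (0:ℝ) < ∏ i, cbar (ω i) :=
    fun ω => Finset.prod_pos fun i _ => hcbar_pos _
  have lip := applyWord_lip f K cbar hfK (fun i => (hcbar_pos i).le)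
    (fun i x hx y hy => (hlip i x hx y hy).2)
  have hdiam : ∀ {l : ℕ} (ω : Fin l → Fin m),
      diam (applyWord f ω '' K) ≤ (∏ i, cbar (ω i)) * D := by
    intro l ω
    apply diam_le_of_forall_dist_le (mul_nonneg (prodnn ω).le hD0)
    rintro _ ⟨x, hx, rfl⟩ _ ⟨y, hy, rfl⟩
    exact le_trans ((lip _ ω).2 x hx y hy)
      (mul_le_mul_of_nonneg_left (dist_le_diam_of_mem hbd hx hy) (prodnn ω).le)
  have hSK : S ⊆ K := by
    rintro _ ⟨x, rfl⟩
    obtain ⟨y, hy, hyx⟩ := hπ x 0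
    rw [applyWord_zero] at hyx
    exact hyx ▸ hy
  -- instance
  haveI : F.NeBot := by rw [hFdef]; infer_instance
  by_cases hDpos : D ≤ 0
  · -- degenerate case: K has diameter zero
    have hzero : ∀ᶠ r in F, Real.log (coverNumber S r) / (-Real.log r) = 0 := by
      filter_upwards [self_mem_nhdsWithin] with r (hr : 0 < r)
      have hle : coverNumber S r ≤ 1 := by
        apply Nat.sInf_le
        refine ⟨{K}, by simp, ?_, ?_⟩
        · intro E hE
          rw [Finset.mem_singleton] at hE
          rw [hE]
          exact le_trans hDpos hr.le
        · intro y hy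
          simpa using hSK hy
      have h01 : Real.log ((coverNumber S r : ℕ) : ℝ) = 0 := by
        rcases Nat.le_one_iff_eq_zero_or_eq_one.mp hle with h | h <;> rw [h] <;> simp
      rw [h01, zero_div]
    have : upperBoxDim S = Filter.limsup (fun _ : ℝ => (0:ℝ)) F := by
      rw [upperBoxDim]
      exact limsup_congr hzero
    rw [hSdef] at this ⊢
    rw [this, limsup_const]
    exact hH0
  push_neg at hDpos
  -- main case
  set B : ℝ := max 1 (L1 * (D / cmin) ^ H) with hBdef
  have hB1 : (1:ℝ) ≤ B := le_max_left _ _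
  set t : ℝ → ℝ := fun r => Real.log (r * cmin / D) / Real.log cmax with htdef
  set N : ℝ → ℕ := fun r => ⌊t r⌋₊ + 1 with hNdef
  have hlogcmax_neg : Real.log cmax < 0 := Real.log_neg hcmax_pos hcmax_lt_one
  -- the key covering estimate
  have key : ∀ r : ℝ, 0 < r → r < 1 →
      (coverNumber S r : ℝ) ≤ ((N r : ℝ) + 1) * (B * r ^ (-H)) := by
    intro r hr0 hr1
    set P : ∀ n : ℕ, (Fin n → Fin m) → Prop := fun n ω =>
      (∏ i, cbar (ω i)) * D ≤ r ∧ (n = 0 ∨ r * cmin < (∏ i, cbar (ω i)) * D) with hPdef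
    set Mor : Finset (Σ n : ℕ, Fin n → Fin m) :=
      (Finset.range (N r + 1)).sigma (fun n => (W n).filter (P n)) with hMordef
    set C : Finset (Set (EuclideanSpace ℝ (Fin d))) :=
      Mor.image (fun p => applyWord f p.2 '' K) with hCdef
    -- coverNumber ≤ card Mor
    have hcover : coverNumber S r ≤ Mor.card := by
      apply Nat.sInf_le
      refine ⟨C, Finset.card_image_le, ?_, ?_⟩
      · intro E hE
        rw [hCdef, Finset.mem_image] at hE
        obtain ⟨p, hp, rfl⟩ := hE
        rw [hMordef, Finset.mem_sigma] at hp
        obtain ⟨-, hp2⟩ := hp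
        rw [Finset.mem_filter] at hp2
        exact le_trans (hdiam p.2) hp2.2.1
      · rintro _ ⟨x, rfl⟩
        have hex : ∃ l : ℕ, (∏ i : Fin l, cbar (x.1 i.1)) * D ≤ r := by
          obtain ⟨l, hl⟩ := exists_pow_lt_of_lt_one (div_pos hr0 hDpos) hcmax_lt_one
          refine ⟨l, ?_⟩
          have h1 : (∏ i : Fin l, cbar (x.1 i.1)) ≤ cmax ^ l := by
            calc (∏ i : Fin l, cbar (x.1 i.1)) ≤ ∏ _i : Fin l, cmax :=
                Finset.prod_le_prod (fun i _ => (hcbar_pos _).le)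
                  (fun i _ => hcbar_le_cmax _)
              _ = cmax ^ l := by simp
          have := (lt_div_iff₀ hDpos).mp hl
          nlinarith
        obtain ⟨n, hn⟩ : ∃ n, Nat.find hex = n := ⟨_, rfl⟩
        have hspec : (∏ i : Fin n, cbar (x.1 i.1)) * D ≤ r := by
          rw [← hn]; exact Nat.find_spec hex
        have hmem : (⟨n, fun i : Fin n => x.1 i.1⟩ : Σ n : ℕ, Fin n → Fin m) ∈ Mor := by
          rw [hMordef, Finset.mem_sigma]
          constructor
          · rw [Finset.mem_range]
            have hnN : n ≤ N r := by
              rcases n with _ | n'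
              · exact Nat.zero_le _
              · have hmin : ¬((∏ i : Fin n', cbar (x.1 i.1)) * D ≤ r) :=
                  Nat.find_min hex (by omega)
                push_neg at hmin
                have h1 : (∏ i : Fin n', cbar (x.1 i.1)) ≤ cmax ^ n' := by
                  calc (∏ i : Fin n', cbar (x.1 i.1)) ≤ ∏ _i : Fin n', cmax :=
                      Finset.prod_le_prod (fun i _ => (hcbar_pos _).le)
                        (fun i _ => hcbar_le_cmax _)
                    _ = cmax ^ n' := by simp
                have h2 : r * cmin / D < cmax ^ n' := by
                  have hrr : r * cmin < r := by nlinarith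
                  have hcm : (0:ℝ) < cmax ^ n' := pow_pos hcmax_pos _
                  have : r < cmax ^ n' * D := by nlinarith
                  rw [div_lt_iff₀ hDpos]
                  nlinarith
                have h3 : Real.log (r * cmin / D) < (n' : ℝ) * Real.log cmax := by
                  have := Real.log_lt_log (by positivity) h2
                  rwa [Real.log_pow] at this
                have h4 : (n' : ℝ) < t r := by
                  rw [htdef]
                  exact (lt_div_iff_of_neg hlogcmax_neg).mpr h3
                have : n' ≤ ⌊t r⌋₊ := Nat.le_floor h4.le
                simp only [hNdef]
                omega
            show n < N r + 1
            omega
          · rw [Finset.mem_filter]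
            refine ⟨x.2 n, hspec, ?_⟩
            rcases n with _ | n'
            · exact Or.inl rfl
            · right
              have hmin : ¬((∏ i : Fin n', cbar (x.1 i.1)) * D ≤ r) :=
                Nat.find_min hex (by omega)
              push_neg at hmin
              have hsplit : (∏ i : Fin (n'+1), cbar (x.1 i.1)) =
                  (∏ i : Fin n', cbar (x.1 i.1)) * cbar (x.1 n') := by
                rw [Fin.prod_univ_castSucc]
                rfl
              have hlast : cmin ≤ cbar (x.1 n') :=
                le_trans (hcmin_le _) (hc _).2.1
              rw [hsplit]
              have hppos : (0:ℝ) < ∏ i : Fin n', cbar (x.1 i.1) :=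
                Finset.prod_pos fun i _ => hcbar_pos _
              nlinarith
        refine Set.mem_biUnion ?_ (hπ x n)
        rw [hCdef]
        exact Finset.mem_image_of_mem _ hmem
    -- counting
    have hrH1 : (1:ℝ) ≤ r ^ (-H) :=
      Real.one_le_rpow_of_pos_of_le_one_of_nonpos hr0 hr1.le (neg_nonpos.mpr hH0)
    have hrHpos : (0:ℝ) < r ^ (-H) := Real.rpow_pos_of_pos hr0 _
    have hterm : ∀ n ∈ Finset.range (N r + 1),
        (((W n).filter (P n)).card : ℝ) ≤ B * r ^ (-H) := by
      intro n _
      rcases Nat.eq_zero_or_pos n with h0 | hpos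
      · subst h0
        have hcard : ((W 0).filter (P 0)).card ≤ 1 :=
          Finset.card_le_one.mpr fun a _ b _ => Subsingleton.elim a b
        calc (((W 0).filter (P 0)).card : ℝ) ≤ 1 := by exact_mod_cast hcard
          _ ≤ B * r ^ (-H) := by nlinarith
      · set Q : ℝ := (r * cmin / D) ^ H with hQdef
        have hQpos : 0 < Q := Real.rpow_pos_of_pos (by positivity) _
        have hsum : (((W n).filter (P n)).card : ℝ) * Q ≤ L1 := by
          have h1 : (((W n).filter (P n)).card : ℝ) * Q ≤
              ∑ ω ∈ (W n).filter (P n), (∏ i, cbar (ω i)) ^ H := by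
            rw [← nsmul_eq_mul]
            apply Finset.card_nsmul_le_sum
            intro ω hω
            rw [Finset.mem_filter] at hω
            have hP := hω.2
            rcases hP.2 with h | h
            · omega
            · have : r * cmin / D ≤ ∏ i, cbar (ω i) := by
                rw [div_le_iff₀ hDpos]
                exact h.le
              exact Real.rpow_le_rpow (by positivity) this hH0
          have h2 : ∑ ω ∈ (W n).filter (P n), (∏ i, cbar (ω i)) ^ H ≤
              ∑ ω ∈ W n, (∏ i, cbar (ω i)) ^ H :=
            Finset.sum_le_sum_of_subset_of_nonneg (Finset.filter_subset _ _)
              (fun ω _ _ => Real.rpow_nonneg (prodnn ω).le _)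
          exact le_trans h1 (le_trans h2 (hL1 n hpos))
        have hQinv : (L1 * (D / cmin) ^ H) * r ^ (-H) = L1 / Q := by
          rw [hQdef]
          rw [Real.rpow_neg hr0.le, ← Real.inv_rpow hr0.le]
          rw [mul_assoc, ← Real.mul_rpow (by positivity) (by positivity)]
          rw [div_eq_mul_inv L1, ← Real.inv_rpow (by positivity)]
          congr 2
          field_simp
        have hcard' : (((W n).filter (P n)).card : ℝ) ≤ L1 / Q :=
          (le_div_iff₀ hQpos).mpr hsum
        calc (((W n).filter (P n)).card : ℝ) ≤ L1 / Q := hcard'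
          _ = (L1 * (D / cmin) ^ H) * r ^ (-H) := hQinv.symm
          _ ≤ B * r ^ (-H) :=
            mul_le_mul_of_nonneg_right (le_max_right _ _) hrHpos.le
    have hcount : (Mor.card : ℝ) ≤ ((N r : ℝ) + 1) * (B * r ^ (-H)) := by
      rw [hMordef, Finset.card_sigma, Nat.cast_sum]
      calc ∑ n ∈ Finset.range (N r + 1), (((W n).filter (P n)).card : ℝ)
          ≤ ∑ _n ∈ Finset.range (N r + 1), B * r ^ (-H) := Finset.sum_le_sum hterm
        _ = ((N r : ℝ) + 1) * (B * r ^ (-H)) := by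
            rw [Finset.sum_const, Finset.card_range, nsmul_eq_mul]
            push_cast; ring
    exact le_trans (by exact_mod_cast hcover) hcount
  -- analytic part
  have hIoo : Set.Ioo (0:ℝ) 1 ∈ F := by
    rw [hFdef]
    exact Ioo_mem_nhdsGT_of_mem (by norm_num : (0:ℝ) ∈ Set.Ico (0:ℝ) 1)
  set g : ℝ → ℝ :=
    fun r => (Real.log ((N r : ℝ) + 1) + Real.log B) / (-Real.log r) with hgdef
  have hfg : ∀ r : ℝ, 0 < r → r < 1 →
      Real.log (coverNumber S r) / (-Real.log r) ≤ H + g r := by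
    intro r hr0 hr1
    have hlogr : 0 < -Real.log r := neg_pos.mpr (Real.log_neg hr0 hr1)
    have hM1 : (1:ℝ) ≤ (N r : ℝ) + 1 := by
      have h := Nat.cast_nonneg (α := ℝ) (N r)
      linarith
    have hrH1 : (1:ℝ) ≤ r ^ (-H) :=
      Real.one_le_rpow_of_pos_of_le_one_of_nonpos hr0 hr1.le (neg_nonpos.mpr hH0)
    have hrHpos : (0:ℝ) < r ^ (-H) := Real.rpow_pos_of_pos hr0 _
    have hBr : (1:ℝ) ≤ B * r ^ (-H) := by
      have h := mul_le_mul hB1 hrH1 zero_le_one (by linarith : (0:ℝ) ≤ B)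
      simpa using h
    have hR1 : (1:ℝ) ≤ ((N r : ℝ) + 1) * (B * r ^ (-H)) := by
      have h := mul_le_mul hM1 hBr zero_le_one (by linarith : (0:ℝ) ≤ (N r : ℝ) + 1)
      simpa using h
    have hlog : Real.log (coverNumber S r) ≤
        Real.log (((N r : ℝ) + 1) * (B * r ^ (-H))) := by
      rcases Nat.eq_zero_or_pos (coverNumber S r) with h0 | hpos
      · rw [h0]
        exact_mod_cast (by simpa using Real.log_nonneg hR1 : Real.log ((0:ℕ):ℝ) ≤ _)
      · exact Real.log_le_log (by exact_mod_cast hpos) (key r hr0 hr1)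
    have hsplit : Real.log (((N r : ℝ) + 1) * (B * r ^ (-H))) =
        Real.log ((N r : ℝ) + 1) + Real.log B + H * (-Real.log r) := by
      rw [Real.log_mul (by positivity) (by positivity),
        Real.log_mul (by positivity) (by positivity), Real.log_rpow hr0]
      ring
    calc Real.log (coverNumber S r) / (-Real.log r)
        ≤ (Real.log ((N r : ℝ) + 1) + Real.log B + H * (-Real.log r)) / (-Real.log r) := by
          rw [← hsplit]
          exact div_le_div_of_nonneg_right hlog hlogr.le
      _ = H + g r := by
          simp only [hgdef]
          rw [add_div, mul_div_cancel_right₀ _ (ne_of_gt hlogr)]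
          ring
  -- the correction term tends to zero
  set a : ℝ := 1 / (-Real.log cmax) with hadef
  have hapos : 0 < a := by
    rw [hadef]
    exact one_div_pos.mpr (by linarith)
  set b : ℝ := |Real.log (cmin / D)| / (-Real.log cmax) + 2 with hbdef
  have hb2 : (2:ℝ) ≤ b := by
    rw [hbdef]
    have : 0 ≤ |Real.log (cmin / D)| / (-Real.log cmax) :=
      div_nonneg (abs_nonneg _) (by linarith)
    linarith
  have hNbound : ∀ r : ℝ, 0 < r → r < 1 →
      (N r : ℝ) + 1 ≤ a * (-Real.log r) + b := by
    intro r hr0 hr1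
    have hfl : (⌊t r⌋₊ : ℝ) ≤ |t r| := by
      rcases le_or_gt 0 (t r) with h | h
      · exact le_trans (Nat.floor_le h) (le_abs_self _)
      · rw [Nat.floor_of_nonpos h.le]
        simpa using abs_nonneg (t r)
    have htabs : |t r| ≤ (-Real.log r + |Real.log (cmin / D)|) / (-Real.log cmax) := by
      rw [htdef]
      rw [abs_div, abs_of_neg hlogcmax_neg]
      apply div_le_div_of_nonneg_right ?_ (by linarith)
      have hsplit : Real.log (r * cmin / D) = Real.log r + Real.log (cmin / D) := by
        rw [mul_div_assoc, Real.log_mul hr0.ne' (by positivity)]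
      rw [hsplit]
      calc |Real.log r + Real.log (cmin / D)| ≤ |Real.log r| + |Real.log (cmin / D)| :=
          abs_add_le _ _
        _ = -Real.log r + |Real.log (cmin / D)| := by
            rw [abs_of_neg (Real.log_neg hr0 hr1)]
    have hNval : (N r : ℝ) = (⌊t r⌋₊ : ℝ) + 1 := by
      simp [hNdef]
    rw [hNval]
    have : (-Real.log r + |Real.log (cmin / D)|) / (-Real.log cmax)
        = a * (-Real.log r) + |Real.log (cmin / D)| / (-Real.log cmax) := by
      rw [hadef]; ring
    rw [hbdef]
    linarith [hfl.trans (htabs.trans_eq this)]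
  set φ : ℝ → ℝ := fun s => (Real.log (a * s + b) + Real.log B) / s with hφdef
  have hφtendsto : Tendsto φ atTop (nhds 0) := by
    have h1 : Tendsto (fun s : ℝ => Real.log (a * s + b) / s) atTop (nhds 0) :=
      tendsto_log_affine_div a b hapos
    have h2 : Tendsto (fun s : ℝ => Real.log B / s) atTop (nhds 0) :=
      Tendsto.div_atTop tendsto_const_nhds tendsto_id
    have := h1.add h2
    simp only [add_zero] at this
    convert this using 2 with s
    rw [hφdef]
    ring
  have hneglog : Tendsto (fun r : ℝ => -Real.log r) F atTop := by
    rw [hFdef]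
    exact tendsto_neg_atBot_atTop.comp Real.tendsto_log_nhdsGT_zero
  have hgtendsto : Tendsto g F (nhds 0) := by
    apply squeeze_zero'
    · filter_upwards [hIoo] with r hr
      have hlogr : 0 < -Real.log r := neg_pos.mpr (Real.log_neg hr.1 hr.2)
      apply div_nonneg ?_ hlogr.le
      have h1 : (0:ℝ) ≤ Real.log ((N r : ℝ) + 1) := Real.log_nonneg (by
        have h := Nat.cast_nonneg (α := ℝ) (N r); linarith)
      have h2 : (0:ℝ) ≤ Real.log B := Real.log_nonneg hB1
      linarith
    · filter_upwards [hIoo] with r hr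
      have hlogr : 0 < -Real.log r := neg_pos.mpr (Real.log_neg hr.1 hr.2)
      show g r ≤ φ (-Real.log r)
      rw [hgdef, hφdef]
      apply div_le_div_of_nonneg_right ?_ hlogr.le
      have h1 : Real.log ((N r : ℝ) + 1) ≤ Real.log (a * (-Real.log r) + b) :=
        Real.log_le_log (by positivity) (hNbound r hr.1 hr.2)
      linarith
    · exact hφtendsto.comp hneglog
  have hHg : Tendsto (fun r => H + g r) F (nhds H) := by
    have h := (tendsto_const_nhds (x := H) (f := F)).add hgtendsto
    simpa using h
  have hev : (fun r : ℝ => Real.log (coverNumber S r) / (-Real.log r)) ≤ᶠ[F]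
      (fun r => H + g r) := by
    filter_upwards [hIoo] with r hr
    exact hfg r hr.1 hr.2
  have hcob : F.IsCoboundedUnder (· ≤ ·)
      (fun r : ℝ => Real.log (coverNumber S r) / (-Real.log r)) := by
    apply isCoboundedUnder_le_of_eventually_le F (x := 0)
    filter_upwards [hIoo] with r hr
    have hlogr : 0 < -Real.log r := neg_pos.mpr (Real.log_neg hr.1 hr.2)
    have hnn : (0:ℝ) ≤ Real.log (coverNumber S r) := by
      rcases Nat.eq_zero_or_pos (coverNumber S r) with h0 | hpos
      · rw [h0]; simp
      · exact Real.log_nonneg (by exact_mod_cast hpos)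
    exact div_nonneg hnn hlogr.le
  have hbdd : F.IsBoundedUnder (· ≤ ·) (fun r => H + g r) :=
    hHg.isBoundedUnder_le
  calc upperBoxDim S
      = Filter.limsup (fun r : ℝ => Real.log (coverNumber S r) / (-Real.log r)) F := rfl
    _ ≤ Filter.limsup (fun r => H + g r) F := limsup_le_limsup hev hcob hbdd
    _ = H := hHg.limsup_eq
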